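/- arXiv:1611.01857 — 9 statements merged into one kernel-verified Lean document; each statement's English description precedes it below -/
import Mathlib

section
/- Let V be a real normed vector space and let A, B, C ⊆ V be nonempty finite subsets. If convexHull ℝ A + convexHull ℝ B = convexHull ℝ A + convexHull ℝ C, then convexHull ℝ B = convexHull ℝ C. (Cancellation property for Minkowski sums of polytopes.) -/
open Pointwise

/-- Rådström cancellation: if `K` is bounded nonempty, `Q` is closed convex,
and `K + P ⊆ K + Q`, then `P ⊆ Q`. -/
lemma radstrom_cancel {V : Type*} [NormedAddCommGroup V] [NormedSpace ℝ V]
    {K P Q : Set V} (hKb : Bornology.IsBounded K) (hKne : K.Nonempty)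
    (hQconv : Convex ℝ Q) (hQclosed : IsClosed Q)
    (hsub : K + P ⊆ K + Q) : P ⊆ Q := by
  intro b hb
  obtain ⟨a₀, ha₀⟩ := hKne
  have hstep : ∀ x : K, ∃ y : K, ∃ c : Q, (x : V) + b = (y : V) + (c : V) := by
    rintro ⟨x, hx⟩
    have : x + b ∈ K + Q := hsub (Set.add_mem_add hx hb)
    obtain ⟨y, hy, c, hc, hyq⟩ := this
    exact ⟨⟨y, hy⟩, ⟨c, hc⟩, hyq.symm⟩
  choose g c hEq using hstep
  set a : ℕ → K := fun n => g^[n] ⟨a₀, ha₀⟩ with ha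
  have hrec : ∀ n, (a n : V) + b = (a (n + 1) : V) + (c (a n) : V) := by
    intro n
    have : a (n + 1) = g (a n) := by
      simp [ha, Function.iterate_succ_apply']
    rw [this]
    exact hEq (a n)
  have key : ∀ n, (a 0 : V) + n • b = (a n : V) + ∑ i ∈ Finset.range n, (c (a i) : V) := by
    intro n
    induction n with
    | zero => simp
    | succ n ih =>
      rw [Finset.sum_range_succ, succ_nsmul, ← add_assoc, ih, add_right_comm, hrec n]
      abel
  obtain ⟨r, hr⟩ := hKb.subset_closedBall 0
  -- averages
  set s : ℕ → V := fun n => ((n + 1 : ℕ) : ℝ)⁻¹ • ∑ i ∈ Finset.range (n + 1), (c (a i) : V)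
    with hs
  have hsQ : ∀ n, s n ∈ Q := by
    intro n
    have hpos : (0 : ℝ) < ((n + 1 : ℕ) : ℝ) := by positivity
    rw [hs]
    simp only [Finset.smul_sum]
    refine hQconv.sum_mem (fun i _ => by positivity) ?_ (fun i _ => (c (a i)).2)
    rw [Finset.sum_const, nsmul_eq_mul]
    push_cast
    field_simp
    simp
  have hdist : ∀ n, ‖b - s n‖ ≤ 2 * r / ((n + 1 : ℕ) : ℝ) := by
    intro n
    have hpos : (0 : ℝ) < ((n + 1 : ℕ) : ℝ) := by positivity
    have hkey := key (n + 1)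
    have hb' : b = ((n + 1 : ℕ) : ℝ)⁻¹ • (((a (n + 1) : V) - (a 0 : V)) +
        ∑ i ∈ Finset.range (n + 1), (c (a i) : V)) := by
      rw [eq_inv_smul_iff₀ hpos.ne', Nat.cast_smul_eq_nsmul, sub_add_eq_add_sub,
        eq_sub_iff_add_eq, add_comm]
      exact hkey
    have hdiff : b - s n = ((n + 1 : ℕ) : ℝ)⁻¹ • ((a (n + 1) : V) - (a 0 : V)) := by
      rw [hb', hs, smul_add]; abel
    rw [hdiff, norm_smul]
    have h1 : ‖(a (n + 1) : V) - (a 0 : V)‖ ≤ 2 * r := by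
      have h2 := hr (a (n + 1)).2
      have h3 := hr (a 0).2
      simp only [Metric.mem_closedBall, dist_zero_right] at h2 h3
      calc ‖(a (n + 1) : V) - (a 0 : V)‖ ≤ ‖(a (n+1) : V)‖ + ‖(a 0 : V)‖ := norm_sub_le _ _
        _ ≤ 2 * r := by linarith
    rw [div_eq_inv_mul]
    push_cast
    rw [Real.norm_eq_abs, abs_of_pos (by positivity : (0:ℝ) < ((n:ℝ) + 1)⁻¹)]
    gcongr
  have htend : Filter.Tendsto s Filter.atTop (nhds b) := by
    rw [tendsto_iff_dist_tendsto_zero]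
    have hA : Filter.Tendsto (fun n : ℕ => 2 * r / ((n + 1 : ℕ) : ℝ)) Filter.atTop (nhds 0) := by
      have h0 := (tendsto_const_div_atTop_nhds_zero_nat (2 * r)).comp
        (Filter.tendsto_add_atTop_nat 1)
      exact h0
    refine squeeze_zero (fun n => dist_nonneg) (fun n => ?_) hA
    rw [dist_comm, dist_eq_norm]
    exact hdist n
  exact hQclosed.mem_of_tendsto htend (Filter.Eventually.of_forall hsQ)



/-- Cancellation property for Minkowski sums of polytopes in a real normed
vector space. -/
theorem polytope_minkowski_cancellation {V : Type*} [NormedAddCommGroup V] [NormedSpace ℝ V]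
    (A B C : Set V) (hAfin : A.Finite) (hAne : A.Nonempty)
    (hBfin : B.Finite) (hBne : B.Nonempty)
    (hCfin : C.Finite) (hCne : C.Nonempty)
    (h : convexHull ℝ A + convexHull ℝ B = convexHull ℝ A + convexHull ℝ C) :
    convexHull ℝ B = convexHull ℝ C := by
  have hKb : Bornology.IsBounded (convexHull ℝ A) :=
    (hAfin.isCompact_convexHull ℝ).isBounded
  have hKne : (convexHull ℝ A).Nonempty := hAne.mono (subset_convexHull ℝ A)
  apply Set.Subset.antisymm
  · exact radstrom_cancel hKb hKne (convex_convexHull ℝ C)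
      (hCfin.isCompact_convexHull ℝ).isClosed h.le
  · exact radstrom_cancel hKb hKne (convex_convexHull ℝ B)
      (hBfin.isCompact_convexHull ℝ).isClosed h.ge
end

section
/- Let V be a real normed vector space and let A, B, C ⊆ V be nonempty finite subsets. If there exists a vector v ∈ V such that convexHull ℝ A + convexHull ℝ B = v +ᵥ (convexHull ℝ A + convexHull ℝ C), then there exists a vector w ∈ V with convexHull ℝ B = w +ᵥ convexHull ℝ C. (The monoid of translation-equivalence classes of polytopes under Minkowski sum is cancellative.) -/
open Pointwise Filter Topology

/-- Rådström cancellation: if `A + B ⊆ A + C` with `A` nonempty bounded and `C`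
closed and convex, then `B ⊆ C`. -/
lemma radstrom_subset {V : Type*} [NormedAddCommGroup V] [NormedSpace ℝ V]
    {A B C : Set V} (hAne : A.Nonempty) (hAb : Bornology.IsBounded A)
    (hC : Convex ℝ C) (hCc : IsClosed C) (h : A + B ⊆ A + C) : B ⊆ C := by
  obtain ⟨R, hR⟩ := hAb.exists_norm_le
  intro b hb
  -- a choice function: for a ∈ A, produce a' ∈ A and c ∈ C with a + b = a' + c
  have key : ∀ a ∈ A, ∃ p : V × V, p.1 ∈ A ∧ p.2 ∈ C ∧ a + b = p.1 + p.2 := by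
    intro a ha
    have : a + b ∈ A + C := h (Set.add_mem_add ha hb)
    obtain ⟨a', ha', c, hc, hac⟩ := Set.mem_add.mp this
    exact ⟨(a', c), ha', hc, hac.symm⟩
  classical
  obtain ⟨a0, ha0⟩ := hAne
  let g : V → V × V := fun a => if ha : a ∈ A then (key a ha).choose else (a0, a0)
  have hg : ∀ a ∈ A, (g a).1 ∈ A ∧ (g a).2 ∈ C ∧ a + b = (g a).1 + (g a).2 := by
    intro a ha
    simp only [g, dif_pos ha]
    exact (key a ha).choose_spec
  let a : ℕ → V := fun n => (fun x => (g x).1)^[n] a0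
  let c : ℕ → V := fun n => (g (a n)).2
  have haA : ∀ n, a n ∈ A := by
    intro n
    induction n with
    | zero => exact ha0
    | succ k ih =>
      have : a (k + 1) = (g (a k)).1 := by
        simp only [a, Function.iterate_succ_apply']
      rw [this]; exact (hg _ ih).1
  have hcC : ∀ n, c n ∈ C := fun n => (hg _ (haA n)).2.1
  have hstep : ∀ n, a n + b = a (n + 1) + c n := by
    intro n
    have h1 : a (n + 1) = (g (a n)).1 := by
      simp only [a, Function.iterate_succ_apply']
    rw [h1]
    exact (hg _ (haA n)).2.2
  -- telescoping sum
  have hsum : ∀ n, a 0 + n • b = a n + ∑ i ∈ Finset.range n, c i := by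
    intro n
    induction n with
    | zero => simp
    | succ k ih =>
      rw [Finset.sum_range_succ]
      calc a 0 + (k + 1) • b = (a 0 + k • b) + b := by rw [succ_nsmul]; abel
        _ = (a k + ∑ i ∈ Finset.range k, c i) + b := by rw [ih]
        _ = (a k + b) + ∑ i ∈ Finset.range k, c i := by abel
        _ = (a (k + 1) + c k) + ∑ i ∈ Finset.range k, c i := by rw [hstep k]
        _ = a (k + 1) + (∑ i ∈ Finset.range k, c i + c k) := by abel
  -- the means
  set m : ℕ → V := fun n => (n : ℝ)⁻¹ • ∑ i ∈ Finset.range n, c i with hm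
  have hmC : ∀ n ≥ 1, m n ∈ C := by
    intro n hn
    have hnpos : (0 : ℝ) < n := by exact_mod_cast hn
    have := hC.sum_mem (t := Finset.range n) (w := fun _ => (n : ℝ)⁻¹)
      (fun i _ => by positivity)
      (by simp [Finset.sum_const, hnpos.ne']) (z := c) (fun i _ => hcC i)
    simpa [hm, Finset.smul_sum] using this
  have hdiff : ∀ n ≥ 1, m n - b = (n : ℝ)⁻¹ • (a 0 - a n) := by
    intro n hn
    have hnpos : (0 : ℝ) < n := by exact_mod_cast hn
    have hs2 : (∑ i ∈ Finset.range n, c i) = (a 0 + n • b) - a n :=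
      eq_sub_of_add_eq' (hsum n).symm
    rw [hm]
    simp only [hs2]
    rw [← Nat.cast_smul_eq_nsmul ℝ n b, smul_sub, smul_add, smul_smul,
      inv_mul_cancel₀ hnpos.ne', one_smul]
    rw [smul_sub]
    abel
  -- bound and convergence
  have hbound : ∀ n ≥ 1, ‖m n - b‖ ≤ (2 * R) / n := by
    intro n hn
    have hnpos : (0 : ℝ) < n := by exact_mod_cast hn
    rw [hdiff n hn, norm_smul]
    have h1 : ‖a 0 - a n‖ ≤ 2 * R :=
      (norm_sub_le _ _).trans (by linarith [hR _ (haA 0), hR _ (haA n)])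
    have : ‖((n : ℝ)⁻¹)‖ = (n : ℝ)⁻¹ := by
      rw [Real.norm_eq_abs, abs_of_pos (by positivity)]
    rw [this, div_eq_inv_mul]
    exact mul_le_mul_of_nonneg_left h1 (by positivity)
  have htend : Tendsto m atTop (𝓝 b) := by
    rw [tendsto_iff_norm_sub_tendsto_zero]
    apply squeeze_zero_norm' _ (tendsto_const_div_atTop_nhds_zero_nat (2 * R))
    filter_upwards [eventually_ge_atTop 1] with n hn
    simpa using hbound n hn
  have : b ∈ closure C := by
    apply mem_closure_of_tendsto htend
    filter_upwards [eventually_ge_atTop 1] with n hn using hmC n hn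
  rwa [hCc.closure_eq] at this

lemma vadd_add_comm' {V : Type*} [AddCommGroup V] (v : V) (P Q : Set V) :
    v +ᵥ (P + Q) = P + (v +ᵥ Q) := by
  ext x
  simp only [Set.mem_vadd_set, Set.mem_add]
  constructor
  · rintro ⟨y, ⟨p, hp, q, hq, rfl⟩, rfl⟩
    exact ⟨p, hp, v +ᵥ q, ⟨q, hq, rfl⟩, by simp only [vadd_eq_add]; abel⟩
  · rintro ⟨p, hp, _, ⟨q, hq, rfl⟩, rfl⟩
    exact ⟨p + q, ⟨p, hp, q, hq, rfl⟩, by simp only [vadd_eq_add]; abel⟩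

/-- The monoid of translation-equivalence classes of polytopes under Minkowski
sum is cancellative: if `convexHull ℝ A + convexHull ℝ B` is a translate of
`convexHull ℝ A + convexHull ℝ C`, then `convexHull ℝ B` is a translate of
`convexHull ℝ C`. -/
theorem polytope_translation_classes_cancellation {V : Type*}
    [NormedAddCommGroup V] [NormedSpace ℝ V]
    (A B C : Set V) (hAfin : A.Finite) (hAne : A.Nonempty)
    (hBfin : B.Finite) (hBne : B.Nonempty)
    (hCfin : C.Finite) (hCne : C.Nonempty)
    (h : ∃ v : V, convexHull ℝ A + convexHull ℝ B =
        v +ᵥ (convexHull ℝ A + convexHull ℝ C)) :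
    ∃ w : V, convexHull ℝ B = w +ᵥ convexHull ℝ C := by
  obtain ⟨v, hv⟩ := h
  rw [vadd_add_comm'] at hv
  refine ⟨v, subset_antisymm ?_ ?_⟩
  · refine radstrom_subset (hAne.mono (subset_convexHull ℝ A))
      ((hAfin.isCompact_convexHull (𝕜 := ℝ)).isBounded)
      ((convex_convexHull ℝ C).vadd v)
      ((hCfin.isCompact_convexHull (𝕜 := ℝ)).isClosed.vadd v) hv.le
  · exact radstrom_subset (hAne.mono (subset_convexHull ℝ A))
      ((hAfin.isCompact_convexHull (𝕜 := ℝ)).isBounded)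
      (convex_convexHull ℝ B)
      (hBfin.isCompact_convexHull (𝕜 := ℝ)).isClosed hv.ge
end

section
/- Let V be a real vector space and φ : V → ℝ a linear map. Let P, Q, P', Q' ⊆ V be polytopes (convex hulls of nonempty finite sets) and suppose there exists v ∈ V with P + Q' = v +ᵥ (P' + Q). Then th_φ(P) − th_φ(Q) = th_φ(P') − th_φ(Q'), where th_φ(S) = sSup (φ '' S) − sInf (φ '' S). (Thickness descends to a well-defined function on the Grothendieck group of polytopes.) -/
open Pointwise

private lemma thick_aux {V : Type*} [AddCommGroup V] [Module ℝ V] (φ : V →ₗ[ℝ] ℝ)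
    {S : Set V} (hfin : S.Finite) (hne : S.Nonempty) :
    (φ '' convexHull ℝ S).Nonempty ∧ BddAbove (φ '' convexHull ℝ S) ∧
      BddBelow (φ '' convexHull ℝ S) := by
  have h1 : φ '' convexHull ℝ S = convexHull ℝ (φ '' S) := φ.image_convexHull S
  have hc : IsCompact (convexHull ℝ (φ '' S)) := (hfin.image φ).isCompact_convexHull ℝ
  rw [h1]
  exact ⟨(hne.image φ).mono (subset_convexHull ℝ _), hc.bddAbove, hc.bddBelow⟩

/-- Thickness descends to a well-defined function on the Grothendieck group of
polytopes: if the formal differences of polytopes `(P, Q)` and `(P', Q')`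
represent the same element, i.e. `P + Q'` is a translate of `P' + Q`, then
`th_φ P - th_φ Q = th_φ P' - th_φ Q'`. -/
theorem thickness_well_defined_on_grothendieck_group {V : Type*}
    [AddCommGroup V] [Module ℝ V] (φ : V →ₗ[ℝ] ℝ)
    (A B A' B' : Set V)
    (hAfin : A.Finite) (hAne : A.Nonempty)
    (hBfin : B.Finite) (hBne : B.Nonempty)
    (hA'fin : A'.Finite) (hA'ne : A'.Nonempty)
    (hB'fin : B'.Finite) (hB'ne : B'.Nonempty)
    (h : ∃ v : V, convexHull ℝ A + convexHull ℝ B' =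
        v +ᵥ (convexHull ℝ A' + convexHull ℝ B)) :
    (sSup (φ '' convexHull ℝ A) - sInf (φ '' convexHull ℝ A)) -
        (sSup (φ '' convexHull ℝ B) - sInf (φ '' convexHull ℝ B)) =
      (sSup (φ '' convexHull ℝ A') - sInf (φ '' convexHull ℝ A')) -
        (sSup (φ '' convexHull ℝ B') - sInf (φ '' convexHull ℝ B')) := by
  obtain ⟨v, hv⟩ := h
  obtain ⟨hAn, hAa, hAb⟩ := thick_aux φ hAfin hAne
  obtain ⟨hBn, hBa, hBb⟩ := thick_aux φ hBfin hBne
  obtain ⟨hA'n, hA'a, hA'b⟩ := thick_aux φ hA'fin hA'ne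
  obtain ⟨hB'n, hB'a, hB'b⟩ := thick_aux φ hB'fin hB'ne
  have himg : φ '' (convexHull ℝ A + convexHull ℝ B') =
      φ '' (v +ᵥ (convexHull ℝ A' + convexHull ℝ B)) := by rw [hv]
  rw [← Set.singleton_vadd] at himg
  simp only [vadd_eq_add] at himg
  rw [Set.image_add, Set.image_add, Set.image_add, Set.image_singleton] at himg
  have hS := congrArg sSup himg
  have hI := congrArg sInf himg
  rw [csSup_add hAn hAa hB'n hB'a,
    csSup_add (Set.singleton_nonempty _) bddAbove_singleton
      ((hA'n.add hBn)) (hA'a.add hBa),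
    csSup_add hA'n hA'a hBn hBa, csSup_singleton] at hS
  rw [csInf_add hAn hAb hB'n hB'b,
    csInf_add (Set.singleton_nonempty _) bddBelow_singleton
      ((hA'n.add hBn)) (hA'b.add hBb),
    csInf_add hA'n hA'b hBn hBb, csInf_singleton] at hI
  linarith
end

section
/- Let V be a real vector space and let A, B ⊆ V be convex sets. If x is an extreme point of A + B (in the sense of Set.extremePoints ℝ), then there exist a ∈ A and b ∈ B with x = a + b such that a is an extreme point of A, b is an extreme point of B, and this decomposition is unique: for all a' ∈ A and b' ∈ B with a' + b' = x one has a' = a and b' = b. -/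
open Pointwise

/-- An extreme point of the Minkowski sum of two convex sets decomposes
uniquely as the sum of an extreme point of each summand. -/
theorem extremePoints_minkowski_sum {V : Type*} [AddCommGroup V] [Module ℝ V]
    (A B : Set V) (hA : Convex ℝ A) (hB : Convex ℝ B) (x : V)
    (hx : x ∈ Set.extremePoints ℝ (A + B)) :
    ∃ a ∈ A, ∃ b ∈ B, x = a + b ∧
      a ∈ Set.extremePoints ℝ A ∧ b ∈ Set.extremePoints ℝ B ∧
      ∀ a' ∈ A, ∀ b' ∈ B, a' + b' = x → a' = a ∧ b' = b := by
  obtain ⟨hxmem, hxext⟩ := hx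
  obtain ⟨a, ha, b, hb, hab⟩ := hxmem
  have hab : a + b = x := hab
  have key : ∀ a' ∈ A, ∀ b' ∈ B, a' + b' = x → a' = a ∧ b' = b := by
    intro a' ha' b' hb' hab'
    have h1 : a + b' ∈ A + B := Set.add_mem_add ha hb'
    have h2 : a' + b ∈ A + B := Set.add_mem_add ha' hb
    have hmem : x ∈ openSegment ℝ (a + b') (a' + b) := by
      refine ⟨1/2, 1/2, by norm_num, by norm_num, by norm_num, ?_⟩
      have h : (a + b') + (a' + b) = x + x := by
        calc (a + b') + (a' + b) = (a + b) + (a' + b') := by abel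
          _ = x + x := by rw [hab, hab']
      rw [← smul_add, h, smul_add, ← add_smul]
      norm_num
    have e1 := hxext h1 h2 hmem
    have e2 := hxext h2 h1 (by rwa [openSegment_symm] at hmem)
    constructor
    · exact add_right_cancel (by rw [e2, ← hab] : a' + b = a + b)
    · exact add_left_cancel (by rw [e1, ← hab] : a + b' = a + b)
  refine ⟨a, ha, b, hb, hab.symm, ⟨ha, ?_⟩, ⟨hb, ?_⟩, key⟩
  · intro a1 ha1 a2 ha2 haseg
    obtain ⟨s, t, hs, ht, hst, heq⟩ := haseg
    have hseg : x ∈ openSegment ℝ (a1 + b) (a2 + b) := by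
      refine ⟨s, t, hs, ht, hst, ?_⟩
      have h : s • (a1 + b) + t • (a2 + b) = (s • a1 + t • a2) + (s + t) • b := by
        module
      rw [h, heq, hst, one_smul, hab]
    have e1 := hxext (Set.add_mem_add ha1 hb) (Set.add_mem_add ha2 hb) hseg
    exact (key a1 ha1 b hb e1).1
  · intro b1 hb1 b2 hb2 hbseg
    obtain ⟨s, t, hs, ht, hst, heq⟩ := hbseg
    have hseg : x ∈ openSegment ℝ (a + b1) (a + b2) := by
      refine ⟨s, t, hs, ht, hst, ?_⟩
      have h : s • (a + b1) + t • (a + b2) = (s + t) • a + (s • b1 + t • b2) := by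
        module
      rw [h, heq, hst, one_smul, hab]
    have e1 := hxext (Set.add_mem_add ha hb1) (Set.add_mem_add ha hb2) hseg
    exact (key a ha b1 hb1 e1).2
end

section
/- Let n be a natural number, let R be a nontrivial (possibly noncommutative) ring with no zero divisors, and let f, g be nonzero elements of the Laurent polynomial ring AddMonoidAlgebra R (Fin n → ℤ). Then f * g ≠ 0 and the Newton polytope of f * g equals the Minkowski sum of the Newton polytopes of f and g: convexHull ℝ (ι '' support (f * g)) = convexHull ℝ (ι '' support f) + convexHull ℝ (ι '' support g), where ι : (Fin n → ℤ) → (Fin n → ℝ) is the coordinatewise coercion. -/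
open Pointwise

/-- The coordinatewise coercion `ℤⁿ → ℝⁿ`. -/
def latticeToReal (n : ℕ) : (Fin n → ℤ) → (Fin n → ℝ) := fun v i => (v i : ℝ)

/-- Over a nontrivial ring without zero divisors, the product of two nonzero
Laurent polynomials in `n` variables is nonzero and the Newton polytope of a
product is the Minkowski sum of the Newton polytopes of the factors. -/
theorem newtonPolytope_mul {n : ℕ} {R : Type*} [Ring R] [Nontrivial R] [NoZeroDivisors R]
    (f g : AddMonoidAlgebra R (Fin n → ℤ)) (hf : f ≠ 0) (hg : g ≠ 0) :
    f * g ≠ 0 ∧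
    convexHull ℝ (latticeToReal n '' ↑(f * g).coeff.support) =
      convexHull ℝ (latticeToReal n '' ↑f.coeff.support) +
        convexHull ℝ (latticeToReal n '' ↑g.coeff.support) := by
  classical
  set ι := latticeToReal n with hι
  have hinj : Function.Injective ι := by
    intro a b h
    funext i
    have h2 : (a i : ℝ) = b i := congrFun h i
    exact_mod_cast h2
  have hadd : ∀ a b, ι (a + b) = ι a + ι b := by
    intro a b; funext i; simp [hι, latticeToReal]
  have hfg : f * g ≠ 0 := mul_ne_zero hf hg
  refine ⟨hfg, ?_⟩
  set A : Set (Fin n → ℝ) := ι '' ↑f.coeff.support with hA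
  set B : Set (Fin n → ℝ) := ι '' ↑g.coeff.support with hB
  have himage : ι '' ((↑f.coeff.support : Set (Fin n → ℤ)) + ↑g.coeff.support) = A + B := by
    ext x
    constructor
    · rintro ⟨v, ⟨a, ha, b, hb, rfl⟩, rfl⟩
      exact ⟨ι a, ⟨a, ha, rfl⟩, ι b, ⟨b, hb, rfl⟩, (hadd a b).symm⟩
    · rintro ⟨_, ⟨a, ha, rfl⟩, _, ⟨b, hb, rfl⟩, rfl⟩
      exact ⟨a + b, ⟨a, ha, b, hb, rfl⟩, hadd a b⟩
  set K : Set (Fin n → ℝ) :=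
    convexHull ℝ (ι '' ((↑f.coeff.support : Set (Fin n → ℤ)) + ↑g.coeff.support)) with hK
  have hbase_fin : (ι '' ((↑f.coeff.support : Set (Fin n → ℤ)) + ↑g.coeff.support)).Finite :=
    (f.coeff.support.finite_toSet.add g.coeff.support.finite_toSet).image _
  -- extreme points of K lie in the support of f * g
  have hK_ext : K.extremePoints ℝ ⊆ ι '' ↑(f * g).coeff.support := by
    intro x hx
    have hxmem : x ∈ ι '' ((↑f.coeff.support : Set (Fin n → ℤ)) + ↑g.coeff.support) :=
      extremePoints_convexHull_subset hx
    obtain ⟨v, ⟨a₀, ha₀, b₀, hb₀, rfl⟩, rfl⟩ := hxmem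
    have huniq : UniqueAdd f.coeff.support g.coeff.support a₀ b₀ := by
      intro a b ha hb hab
      have h1 : ι a + ι b = ι a₀ + ι b₀ := by rw [← hadd, ← hadd, hab]
      have hy : ι (a + b₀) ∈ K :=
        subset_convexHull ℝ _ ⟨a + b₀, ⟨a, ha, b₀, hb₀, rfl⟩, rfl⟩
      have hz : ι (a₀ + b) ∈ K :=
        subset_convexHull ℝ _ ⟨a₀ + b, ⟨a₀, ha₀, b, hb, rfl⟩, rfl⟩
      have hmid : ι (a₀ + b₀) ∈ openSegment ℝ (ι (a + b₀)) (ι (a₀ + b)) := by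
        refine ⟨1/2, 1/2, by norm_num, by norm_num, by norm_num, ?_⟩
        rw [hadd, hadd, hadd]
        funext i
        have h1i : ι a i + ι b i = ι a₀ i + ι b₀ i := congrFun h1 i
        simp only [Pi.add_apply, Pi.smul_apply, smul_eq_mul]
        linarith
      obtain ⟨e1, e2⟩ := (mem_extremePoints.mp hx).2 _ hy _ hz hmid
      have ea : a + b₀ = a₀ + b₀ := hinj e1
      have eb : a₀ + b = a₀ + b₀ := hinj e2
      exact ⟨add_right_cancel ea, add_left_cancel eb⟩
    have hcoeff : (f * g).coeff (a₀ + b₀) = f.coeff a₀ * g.coeff b₀ :=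
      AddMonoidAlgebra.coeff_mul_add_of_uniqueAdd huniq
    refine ⟨a₀ + b₀, ?_, rfl⟩
    rw [Finset.mem_coe, Finsupp.mem_support_iff, hcoeff]
    exact mul_ne_zero (Finsupp.mem_support_iff.mp (Finset.mem_coe.mp ha₀))
      (Finsupp.mem_support_iff.mp (Finset.mem_coe.mp hb₀))
  -- K is the convex hull of its extreme points (Krein–Milman + finiteness)
  have hKcompact : IsCompact K := hbase_fin.isCompact_convexHull ℝ
  have hext_fin : (K.extremePoints ℝ).Finite :=
    hbase_fin.subset extremePoints_convexHull_subset
  have hKM : closure (convexHull ℝ (K.extremePoints ℝ)) = K :=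
    closure_convexHull_extremePoints hKcompact (convex_convexHull ℝ _)
  have hK_sub : K ⊆ convexHull ℝ (ι '' ↑(f * g).coeff.support) := by
    rw [← hKM, (hext_fin.isCompact_convexHull ℝ).isClosed.closure_eq]
    exact convexHull_mono hK_ext
  have hsub2 : convexHull ℝ (ι '' ↑(f * g).coeff.support) ⊆ K := by
    apply convexHull_mono
    apply Set.image_mono
    intro v hv
    have := AddMonoidAlgebra.support_coeff_mul_subset f g (Finset.mem_coe.mp hv)
    rw [Finset.mem_add] at this
    obtain ⟨a, ha, b, hb, rfl⟩ := this
    exact ⟨a, ha, b, hb, rfl⟩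
  have hfinal : K = convexHull ℝ A + convexHull ℝ B := by
    rw [hK, himage, convexHull_add]
  rw [← hfinal]
  exact le_antisymm hsub2 hK_sub
end

section
/- Let n be a natural number, let R be a nontrivial (possibly noncommutative) ring with no zero divisors, and let f, g be nonzero elements of AddMonoidAlgebra R (Fin n → ℤ). Let u ∈ (Fin n → ℤ) be such that ι(u) is an extreme point of convexHull ℝ (ι '' support f) + convexHull ℝ (ι '' support g), where ι : (Fin n → ℤ) → (Fin n → ℝ) is the coordinatewise coercion. Then there exist unique v ∈ support f and w ∈ support g with v + w = u; moreover ι(v) is an extreme point of the Newton polytope of f, ι(w) is an extreme point of the Newton polytope of g, and the coefficient of f * g at u equals (f v) * (g w), which is nonzero. -/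
open Pointwise

lemma latticeToReal_injective (n : ℕ) : Function.Injective (latticeToReal n) := by
  intro x y h
  funext i
  have := congrFun h i
  simpa [latticeToReal] using this

lemma latticeToReal_add (n : ℕ) (x y : Fin n → ℤ) :
    latticeToReal n (x + y) = latticeToReal n x + latticeToReal n y := by
  funext i
  simp [latticeToReal]

lemma extreme_add_decomp {E : Type*} [AddCommGroup E] [Module ℝ E]
    {A B : Set E} {x : E} (hx : x ∈ Set.extremePoints ℝ (A + B)) :
    ∃ a ∈ A, ∃ b ∈ B, a + b = x ∧
      (∀ a' ∈ A, ∀ b' ∈ B, a' + b' = x → a' = a ∧ b' = b) ∧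
      a ∈ Set.extremePoints ℝ A ∧ b ∈ Set.extremePoints ℝ B := by
  obtain ⟨hmem, hext⟩ := hx
  obtain ⟨a, ha, b, hb, hab⟩ := hmem
  have hab : a + b = x := hab
  have half : (0:ℝ) < 1/2 := by norm_num
  refine ⟨a, ha, b, hb, hab, ?_, ⟨ha, ?_⟩, ⟨hb, ?_⟩⟩
  · intro a' ha' b' hb' h'
    have h1 : x ∈ openSegment ℝ (a + b') (a' + b) := by
      refine ⟨1/2, 1/2, half, half, by norm_num, ?_⟩
      rw [smul_add, smul_add]
      have : (1/2:ℝ) • a + (1/2:ℝ) • a' + ((1/2:ℝ) • b' + (1/2:ℝ) • b)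
          = (1/2:ℝ) • (a + b) + (1/2:ℝ) • (a' + b') := by
        rw [smul_add, smul_add]; abel
      calc (1/2:ℝ) • a + (1/2:ℝ) • b' + ((1/2:ℝ) • a' + (1/2:ℝ) • b)
          = (1/2:ℝ) • a + (1/2:ℝ) • a' + ((1/2:ℝ) • b' + (1/2:ℝ) • b) := by abel
        _ = (1/2:ℝ) • (a + b) + (1/2:ℝ) • (a' + b') := this
        _ = x := by rw [hab, h']; module
    obtain ⟨e1, e2⟩ : _ ∧ _ := ⟨hext (Set.add_mem_add ha hb') (Set.add_mem_add ha' hb) h1,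
      hext (Set.add_mem_add ha' hb) (Set.add_mem_add ha hb') (by rw [openSegment_symm]; exact h1)⟩
    constructor
    · have : a' + b = a + b := by rw [e2, ← hab]
      exact add_right_cancel this
    · have : a + b' = a + b := by rw [e1, ← hab]
      exact add_left_cancel this
  · intro x₁ hx₁ x₂ hx₂ hseg
    obtain ⟨c, d, hc, hd, hcd, heq⟩ := hseg
    have h1 : x ∈ openSegment ℝ (x₁ + b) (x₂ + b) := by
      refine ⟨c, d, hc, hd, hcd, ?_⟩
      rw [smul_add, smul_add]
      calc c • x₁ + c • b + (d • x₂ + d • b)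
          = (c • x₁ + d • x₂) + (c + d) • b := by rw [add_smul]; abel
        _ = a + b := by rw [heq, hcd, one_smul]
        _ = x := hab
    have e1 := hext (Set.add_mem_add hx₁ hb) (Set.add_mem_add hx₂ hb) h1
    · have : x₁ + b = a + b := by rw [e1, ← hab]
      exact add_right_cancel this
  · intro x₁ hx₁ x₂ hx₂ hseg
    obtain ⟨c, d, hc, hd, hcd, heq⟩ := hseg
    have h1 : x ∈ openSegment ℝ (a + x₁) (a + x₂) := by
      refine ⟨c, d, hc, hd, hcd, ?_⟩
      rw [smul_add, smul_add]
      calc c • a + c • x₁ + (d • a + d • x₂)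
          = (c + d) • a + (c • x₁ + d • x₂) := by rw [add_smul]; abel
        _ = a + b := by rw [heq, hcd, one_smul]
        _ = x := hab
    have e1 := hext (Set.add_mem_add ha hx₁) (Set.add_mem_add ha hx₂) h1
    · have : a + x₁ = a + b := by rw [e1, ← hab]
      exact add_left_cancel this

/-- Over a nontrivial ring without zero divisors, if `u` maps to an extreme
point of the Minkowski sum of the Newton polytopes of two nonzero Laurent
polynomials `f` and `g`, then `u` decomposes uniquely as a sum `v + w` with
`v` in the support of `f` and `w` in the support of `g`; moreover `v` and `w`
are vertices of the respective Newton polytopes and the coefficient of `f * g`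
at `u` is `f v * g w ≠ 0`. -/
theorem newtonPolytope_extremePoint_coeff {n : ℕ} {R : Type*}
    [Ring R] [Nontrivial R] [NoZeroDivisors R]
    (f g : AddMonoidAlgebra R (Fin n → ℤ)) (hf : f ≠ 0) (hg : g ≠ 0)
    (u : Fin n → ℤ)
    (hu : latticeToReal n u ∈ Set.extremePoints ℝ
      (convexHull ℝ (latticeToReal n '' ↑f.coeff.support) +
        convexHull ℝ (latticeToReal n '' ↑g.coeff.support))) :
    ∃ v ∈ f.coeff.support, ∃ w ∈ g.coeff.support, v + w = u ∧
      (∀ v' ∈ f.coeff.support, ∀ w' ∈ g.coeff.support, v' + w' = u → v' = v ∧ w' = w) ∧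
      latticeToReal n v ∈
        Set.extremePoints ℝ (convexHull ℝ (latticeToReal n '' ↑f.coeff.support)) ∧
      latticeToReal n w ∈
        Set.extremePoints ℝ (convexHull ℝ (latticeToReal n '' ↑g.coeff.support)) ∧
      (f * g).coeff u = f.coeff v * g.coeff w ∧ (f * g).coeff u ≠ 0 := by
  classical
  obtain ⟨a, ha, b, hb, hab, huniq, hea, heb⟩ := extreme_add_decomp hu
  obtain ⟨v, hv, rfl⟩ := extremePoints_convexHull_subset hea
  obtain ⟨w, hw, rfl⟩ := extremePoints_convexHull_subset heb
  have hv' : v ∈ f.coeff.support := hv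
  have hw' : w ∈ g.coeff.support := hw
  have hvw : v + w = u := by
    apply latticeToReal_injective n
    rw [latticeToReal_add]; exact hab
  have key : ∀ v' ∈ f.coeff.support, ∀ w' ∈ g.coeff.support, v' + w' = u → v' = v ∧ w' = w := by
    intro v' hv'' w' hw'' h'
    have h1 : latticeToReal n v' ∈ convexHull ℝ (latticeToReal n '' ↑f.coeff.support) :=
      subset_convexHull ℝ _ ⟨v', hv'', rfl⟩
    have h2 : latticeToReal n w' ∈ convexHull ℝ (latticeToReal n '' ↑g.coeff.support) :=
      subset_convexHull ℝ _ ⟨w', hw'', rfl⟩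
    have h3 : latticeToReal n v' + latticeToReal n w' = latticeToReal n u := by
      rw [← latticeToReal_add, h']
    obtain ⟨e1, e2⟩ := huniq _ h1 _ h2 h3
    exact ⟨latticeToReal_injective n e1, latticeToReal_injective n e2⟩
  have hcoeff : (f * g).coeff u = f.coeff v * g.coeff w := by
    rw [AddMonoidAlgebra.coeff_mul]
    rw [Finsupp.sum]
    rw [Finset.sum_eq_single v]
    · rw [Finsupp.sum, Finset.sum_eq_single w]
      · rw [if_pos hvw]
      · intro w' hw'' hne
        rw [if_neg]
        intro h
        exact hne (key v hv' w' hw'' h).2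
      · intro h
        exact absurd hw' h
    · intro v' hv'' hne
      rw [Finsupp.sum]
      apply Finset.sum_eq_zero
      intro w' hw''
      rw [if_neg]
      intro h
      exact hne (key v' hv'' w' hw'' h).1
    · intro h
      exact absurd hv' h
  refine ⟨v, hv', w, hw', hvw, key, hea, heb, hcoeff, ?_⟩
  rw [hcoeff]
  exact mul_ne_zero (Finsupp.mem_support_iff.mp hv') (Finsupp.mem_support_iff.mp hw')
end

section
/- Let n be a natural number and let f, g be nonzero elements of AddMonoidAlgebra ℤ (Fin n → ℤ). Let u ∈ (Fin n → ℤ) be such that ι(u) is an extreme point of the Newton polytope of f * g, where ι : (Fin n → ℤ) → (Fin n → ℝ) is the coordinatewise coercion, and let v ∈ support f, w ∈ support g be the unique elements with v + w = u. Then the coefficient of f * g at u satisfies |(f * g) u| = 1 if and only if |f v| = 1 and |g w| = 1. (A vertex of the Newton polytope of a product of integral Laurent polynomials is marked, i.e. has coefficient ±1, if and only if it is the sum of marked vertices of the factors.) -/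
open Pointwise

/-- A vertex of the Newton polytope of a product of integral Laurent
polynomials has coefficient `±1` if and only if it is the sum of support
elements of the factors whose coefficients are both `±1`. -/
theorem newtonPolytope_marked_vertex_mul {n : ℕ}
    (f g : AddMonoidAlgebra ℤ (Fin n → ℤ)) (hf : f ≠ 0) (hg : g ≠ 0)
    (u : Fin n → ℤ)
    (hu : latticeToReal n u ∈ Set.extremePoints ℝ
      (convexHull ℝ (latticeToReal n '' ↑(f * g).coeff.support)))
    (v w : Fin n → ℤ) (hv : v ∈ f.coeff.support) (hw : w ∈ g.coeff.support)
    (hvw : v + w = u)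
    (huniq : ∀ v' ∈ f.coeff.support, ∀ w' ∈ g.coeff.support, v' + w' = u → v' = v ∧ w' = w) :
    |(f * g).coeff u| = 1 ↔ |f.coeff v| = 1 ∧ |g.coeff w| = 1 := by
  have key : (f * g).coeff u = f.coeff v * g.coeff w := by
    rw [AddMonoidAlgebra.coeff_mul]
    rw [Finsupp.sum]
    rw [Finset.sum_eq_single v]
    · rw [Finsupp.sum, Finset.sum_eq_single w]
      · rw [if_pos hvw]
      · intro w' hw' hne
        exact if_neg fun h => hne (huniq v hv w' hw' h).2
      · intro h
        simp [Finsupp.notMem_support_iff.mp h]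
    · intro v' hv' hne
      rw [Finsupp.sum]
      apply Finset.sum_eq_zero
      intro w' hw'
      exact if_neg fun h => hne (huniq v' hv' w' hw' h).1
    · intro h
      exact absurd hv h
  rw [key, abs_mul]
  constructor
  · intro h
    have h1 : |f.coeff v| = 1 ∨ |f.coeff v| = -1 ∧ |g.coeff w| = -1 := by
      rcases Int.mul_eq_one_iff_eq_one_or_neg_one.mp h with ⟨h1, h2⟩ | ⟨h1, h2⟩
      · exact Or.inl h1
      · exact Or.inr ⟨h1, h2⟩
    rcases h1 with h1 | ⟨h1, _⟩
    · rw [h1, one_mul] at h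
      exact ⟨h1, h⟩
    · linarith [abs_nonneg (f.coeff v)]
  · rintro ⟨h1, h2⟩
    rw [h1, h2, one_mul]
end

section
/- Let n be a natural number, let R be a nontrivial (possibly noncommutative) ring with no zero divisors, let φ : (Fin n → ℤ) → ℤ be an additive group homomorphism, and let f, g be nonzero elements of AddMonoidAlgebra R (Fin n → ℤ). Then f * g ≠ 0, the maximum of φ over the support of f * g equals the sum of the maxima of φ over the supports of f and of g, and likewise the minimum of φ over the support of f * g equals the sum of the minima of φ over the supports of f and of g. In particular the φ-thickness of the support, max − min, is additive: th_φ(f * g) = th_φ(f) + th_φ(g). -/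
open Pointwise

private lemma sup'_aux {n : ℕ} {R : Type*}
    [Ring R] [Nontrivial R] [NoZeroDivisors R]
    (φ : (Fin n → ℤ) →+ ℤ)
    (f g : AddMonoidAlgebra R (Fin n → ℤ)) (hf : f ≠ 0) (hg : g ≠ 0)
    (hf' : f.coeff.support.Nonempty) (hg' : g.coeff.support.Nonempty)
    (hfg' : (f * g).coeff.support.Nonempty) :
    (f * g).coeff.support.sup' hfg' φ = f.coeff.support.sup' hf' φ + g.coeff.support.sup' hg' φ := by
  classical
  set A := f.coeff.support.sup' hf' φ with hA
  set B := g.coeff.support.sup' hg' φ with hB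
  apply le_antisymm
  · apply Finset.sup'_le
    intro x hx
    have := AddMonoidAlgebra.support_coeff_mul_subset f g hx
    rw [Finset.mem_add] at this
    obtain ⟨a, ha, b, hb, rfl⟩ := this
    rw [map_add]
    exact add_le_add (Finset.le_sup' φ ha) (Finset.le_sup' φ hb)
  · -- existence of x in support with φ x = A + B
    set fT : AddMonoidAlgebra R (Fin n → ℤ) := AddMonoidAlgebra.ofCoeff (f.coeff.filter (fun v => φ v = A)) with hfT
    set gT : AddMonoidAlgebra R (Fin n → ℤ) := AddMonoidAlgebra.ofCoeff (g.coeff.filter (fun v => φ v = B)) with hgT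
    have hfTs : fT.coeff.support = f.coeff.support.filter (fun v => φ v = A) := Finsupp.support_filter _ _
    have hgTs : gT.coeff.support = g.coeff.support.filter (fun v => φ v = B) := Finsupp.support_filter _ _
    have hfT0 : fT ≠ 0 := by
      obtain ⟨a, ha, hae⟩ := Finset.exists_mem_eq_sup' hf' φ
      intro h
      have : a ∈ fT.coeff.support := by
        rw [hfTs, Finset.mem_filter]
        exact ⟨ha, hae.symm⟩
      rw [h] at this; simp at this
    have hgT0 : gT ≠ 0 := by
      obtain ⟨a, ha, hae⟩ := Finset.exists_mem_eq_sup' hg' φ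
      intro h
      have : a ∈ gT.coeff.support := by
        rw [hgTs, Finset.mem_filter]
        exact ⟨ha, hae.symm⟩
      rw [h] at this; simp at this
    have hTT : fT * gT ≠ 0 := mul_ne_zero hfT0 hgT0
    obtain ⟨x, hx⟩ := Finsupp.support_nonempty_iff.2 (AddMonoidAlgebra.coeff_eq_zero.not.2 hTT)
    have hxmem := AddMonoidAlgebra.support_coeff_mul_subset fT gT hx
    rw [Finset.mem_add] at hxmem
    obtain ⟨a, ha, b, hb, rfl⟩ := hxmem
    rw [hfTs, Finset.mem_filter] at ha
    rw [hgTs, Finset.mem_filter] at hb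
    -- φ (a + b) = A + B
    have hφx : φ (a + b) = A + B := by rw [map_add, ha.2, hb.2]
    -- show a + b ∈ (f * g).coeff.support
    have key : (f * g).coeff (a + b) = (fT * gT).coeff (a + b) := by
      set fR : AddMonoidAlgebra R (Fin n → ℤ) := AddMonoidAlgebra.ofCoeff (f.coeff.filter (fun v => ¬ φ v = A)) with hfR
      set gR : AddMonoidAlgebra R (Fin n → ℤ) := AddMonoidAlgebra.ofCoeff (g.coeff.filter (fun v => ¬ φ v = B)) with hgR
      have hfsplit : fT + fR = f := AddMonoidAlgebra.coeff_injective (Finsupp.filter_pos_add_filter_neg f.coeff _)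
      have hgsplit : gT + gR = g := AddMonoidAlgebra.coeff_injective (Finsupp.filter_pos_add_filter_neg g.coeff _)
      have notmem : ∀ (p q : AddMonoidAlgebra R (Fin n → ℤ)),
          (∀ v ∈ p.coeff.support, φ v ≤ A) → (∀ v ∈ q.coeff.support, φ v ≤ B) →
          (∀ v ∈ p.coeff.support, φ v ≠ A) ∨ (∀ v ∈ q.coeff.support, φ v ≠ B) →
          (p * q).coeff (a + b) = 0 := by
        intro p q hp hq hor
        by_contra h
        have : a + b ∈ (p * q).coeff.support := Finsupp.mem_support_iff.2 h
        have := AddMonoidAlgebra.support_coeff_mul_subset p q this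
        rw [Finset.mem_add] at this
        obtain ⟨c, hc, d, hd, hcd⟩ := this
        have hcd' : φ c + φ d = A + B := by rw [← map_add, hcd, hφx]
        rcases hor with hor | hor
        · have h1 : φ c < A := lt_of_le_of_ne (hp c hc) (hor c hc)
          have h2 : φ d ≤ B := hq d hd
          omega
        · have h1 : φ d < B := lt_of_le_of_ne (hq d hd) (hor d hd)
          have h2 : φ c ≤ A := hp c hc
          omega
      have hfRs : ∀ v ∈ fR.coeff.support, φ v ≤ A ∧ φ v ≠ A := by
        intro v hv
        rw [hfR, AddMonoidAlgebra.coeff_ofCoeff, Finsupp.support_filter, Finset.mem_filter] at hv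
        exact ⟨Finset.le_sup' φ hv.1, hv.2⟩
      have hgRs : ∀ v ∈ gR.coeff.support, φ v ≤ B ∧ φ v ≠ B := by
        intro v hv
        rw [hgR, AddMonoidAlgebra.coeff_ofCoeff, Finsupp.support_filter, Finset.mem_filter] at hv
        exact ⟨Finset.le_sup' φ hv.1, hv.2⟩
      have hfTs' : ∀ v ∈ fT.coeff.support, φ v ≤ A := by
        intro v hv; rw [hfTs, Finset.mem_filter] at hv; exact le_of_eq hv.2
      have hgTs' : ∀ v ∈ gT.coeff.support, φ v ≤ B := by
        intro v hv; rw [hgTs, Finset.mem_filter] at hv; exact le_of_eq hv.2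
      have h0 : f * g = fT * gT + (fT * gR + (fR * gT + fR * gR)) := by
        rw [← hfsplit, ← hgsplit, add_mul, mul_add, mul_add, add_assoc]
      rw [h0, AddMonoidAlgebra.coeff_add, AddMonoidAlgebra.coeff_add, AddMonoidAlgebra.coeff_add,
        Finsupp.add_apply, Finsupp.add_apply, Finsupp.add_apply,
        notmem fT gR hfTs' (fun v hv => (hgRs v hv).1) (Or.inr (fun v hv => (hgRs v hv).2)),
        notmem fR gT (fun v hv => (hfRs v hv).1) hgTs' (Or.inl (fun v hv => (hfRs v hv).2)),
        notmem fR gR (fun v hv => (hfRs v hv).1) (fun v hv => (hgRs v hv).1)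
          (Or.inl (fun v hv => (hfRs v hv).2))]
      simp
    have : a + b ∈ (f * g).coeff.support := by
      rw [Finsupp.mem_support_iff, key]
      exact Finsupp.mem_support_iff.1 hx
    calc A + B = φ (a + b) := hφx.symm
      _ ≤ (f * g).coeff.support.sup' hfg' φ := Finset.le_sup' φ this

/-- For nonzero Laurent polynomials `f, g` over a nontrivial ring without zero
divisors and an additive homomorphism `φ : ℤⁿ → ℤ`, the product `f * g` is
nonzero, the maximum (resp. minimum) of `φ` on the support of `f * g` is the
sum of the maxima (resp. minima) of `φ` on the supports of `f` and `g`, and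
hence the `φ`-thickness `max - min` of the support is additive. -/
theorem thickness_support_mul {n : ℕ} {R : Type*}
    [Ring R] [Nontrivial R] [NoZeroDivisors R]
    (φ : (Fin n → ℤ) →+ ℤ)
    (f g : AddMonoidAlgebra R (Fin n → ℤ)) (hf : f ≠ 0) (hg : g ≠ 0) :
    f * g ≠ 0 ∧
    sSup (φ '' ↑(f * g).coeff.support) =
      sSup (φ '' ↑f.coeff.support) + sSup (φ '' ↑g.coeff.support) ∧
    sInf (φ '' ↑(f * g).coeff.support) =
      sInf (φ '' ↑f.coeff.support) + sInf (φ '' ↑g.coeff.support) ∧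
    sSup (φ '' ↑(f * g).coeff.support) - sInf (φ '' ↑(f * g).coeff.support) =
      (sSup (φ '' ↑f.coeff.support) - sInf (φ '' ↑f.coeff.support)) +
        (sSup (φ '' ↑g.coeff.support) - sInf (φ '' ↑g.coeff.support)) := by
  classical
  have hfg : f * g ≠ 0 := mul_ne_zero hf hg
  have hf' : f.coeff.support.Nonempty := Finsupp.support_nonempty_iff.2 (AddMonoidAlgebra.coeff_eq_zero.not.2 hf)
  have hg' : g.coeff.support.Nonempty := Finsupp.support_nonempty_iff.2 (AddMonoidAlgebra.coeff_eq_zero.not.2 hg)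
  have hfg' : (f * g).coeff.support.Nonempty := Finsupp.support_nonempty_iff.2 (AddMonoidAlgebra.coeff_eq_zero.not.2 hfg)
  -- conversion lemmas
  have conv : ∀ (ψ : (Fin n → ℤ) →+ ℤ) (p : AddMonoidAlgebra R (Fin n → ℤ))
      (hp : p.coeff.support.Nonempty), sSup (ψ '' ↑p.coeff.support) = p.coeff.support.sup' hp ψ := by
    intro ψ p hp
    rw [← Finset.coe_image, (hp.image ψ).csSup_eq_max', Finset.max'_eq_sup',
      Finset.sup'_image]
    rfl
  have convInf : ∀ (ψ : (Fin n → ℤ) →+ ℤ) (p : AddMonoidAlgebra R (Fin n → ℤ))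
      (hp : p.coeff.support.Nonempty), sInf (ψ '' ↑p.coeff.support) = p.coeff.support.inf' hp ψ := by
    intro ψ p hp
    rw [← Finset.coe_image, (hp.image ψ).csInf_eq_min', Finset.min'_eq_inf',
      Finset.inf'_image]
    rfl
  have hinf : ∀ (p : AddMonoidAlgebra R (Fin n → ℤ)) (hp : p.coeff.support.Nonempty),
      p.coeff.support.inf' hp φ = - p.coeff.support.sup' hp (-φ) := by
    intro p hp
    apply le_antisymm
    · obtain ⟨a, ha, hae⟩ := Finset.exists_mem_eq_sup' hp (-φ)
      have h1 : p.coeff.support.inf' hp φ ≤ φ a := Finset.inf'_le φ ha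
      have : ((-φ) a : ℤ) = - φ a := rfl
      omega
    · apply Finset.le_inf'
      intro x hx
      have h1 : ((-φ) x : ℤ) = - φ x := rfl
      have h2 := Finset.le_sup' (-φ : (Fin n → ℤ) →+ ℤ) hx
      omega
  have hsup := sup'_aux φ f g hf hg hf' hg' hfg'
  have hinfeq : (f * g).coeff.support.inf' hfg' φ =
      f.coeff.support.inf' hf' φ + g.coeff.support.inf' hg' φ := by
    have := sup'_aux (-φ) f g hf hg hf' hg' hfg'
    rw [hinf _ hfg', hinf _ hf', hinf _ hg', this]
    ring
  refine ⟨hfg, ?_, ?_, ?_⟩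
  · rw [conv φ _ hfg', conv φ _ hf', conv φ _ hg', hsup]
  · rw [convInf φ _ hfg', convInf φ _ hf', convInf φ _ hg', hinfeq]
  · rw [conv φ _ hfg', conv φ _ hf', conv φ _ hg',
      convInf φ _ hfg', convInf φ _ hf', convInf φ _ hg', hsup, hinfeq]
    ring
end

section
/- The monoid of marked polytopes under marked Minkowski sum does not have the cancellation property. Precisely: there exist nonempty finite sets A, B ⊆ ℝ² (with ℝ² = EuclideanSpace ℝ (Fin 2) or Fin 2 → ℝ) and nonempty marking sets V ⊆ Set.extremePoints ℝ (convexHull ℝ A), W ⊆ Set.extremePoints ℝ (convexHull ℝ B), W' ⊆ Set.extremePoints ℝ (convexHull ℝ B) with W ≠ W', such that the marked Minkowski sums agree: {v + w | v ∈ V, w ∈ W} ∩ Set.extremePoints ℝ (convexHull ℝ A + convexHull ℝ B) = {v + w' | v ∈ V, w' ∈ W'} ∩ Set.extremePoints ℝ (convexHull ℝ A + convexHull ℝ B). -/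
open Pointwise

private lemma seg_mem_iff (b : Fin 2 → ℝ) {x : Fin 2 → ℝ}
    (hx : x ∈ convexHull ℝ ({0, b} : Set (Fin 2 → ℝ))) :
    ∃ θ : ℝ, θ ∈ Set.Icc (0:ℝ) 1 ∧ x = θ • b := by
  rw [convexHull_pair, segment_eq_image] at hx
  obtain ⟨θ, hθ, hx⟩ := hx
  exact ⟨θ, hθ, by rw [← hx]; simp⟩

private lemma zero_extreme (b : Fin 2 → ℝ) (hb : 0 < b 0) :
    (0 : Fin 2 → ℝ) ∈ Set.extremePoints ℝ (convexHull ℝ ({0, b} : Set (Fin 2 → ℝ))) := by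
  rw [mem_extremePoints]
  refine ⟨subset_convexHull ℝ _ (by simp), ?_⟩
  rintro x₁ hx₁ x₂ hx₂ ⟨a, c, ha, hc, hac, h⟩
  obtain ⟨θ₁, hθ₁, rfl⟩ := seg_mem_iff b hx₁
  obtain ⟨θ₂, hθ₂, rfl⟩ := seg_mem_iff b hx₂
  have h0 := congrFun h 0
  simp only [Pi.add_apply, Pi.smul_apply, smul_eq_mul, Pi.zero_apply] at h0
  have t1 : (0:ℝ) ≤ a * (θ₁ * b 0) := mul_nonneg ha.le (mul_nonneg hθ₁.1 hb.le)
  have t2 : (0:ℝ) ≤ c * (θ₂ * b 0) := mul_nonneg hc.le (mul_nonneg hθ₂.1 hb.le)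
  have e1 : a * (θ₁ * b 0) = 0 := by linarith
  have e2 : c * (θ₂ * b 0) = 0 := by linarith
  have hθ1 : θ₁ = 0 := by
    rcases mul_eq_zero.1 e1 with h' | h'
    · exact absurd h' ha.ne'
    · rcases mul_eq_zero.1 h' with h'' | h''
      · exact h''
      · exact absurd h'' hb.ne'
  have hθ2 : θ₂ = 0 := by
    rcases mul_eq_zero.1 e2 with h' | h'
    · exact absurd h' hc.ne'
    · rcases mul_eq_zero.1 h' with h'' | h''
      · exact h''
      · exact absurd h'' hb.ne' 
  subst hθ1; subst hθ2
  simp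

private lemma right_extreme (b : Fin 2 → ℝ) (hb : 0 < b 0) :
    b ∈ Set.extremePoints ℝ (convexHull ℝ ({0, b} : Set (Fin 2 → ℝ))) := by
  rw [mem_extremePoints]
  refine ⟨subset_convexHull ℝ _ (by simp), ?_⟩
  rintro x₁ hx₁ x₂ hx₂ ⟨a, c, ha, hc, hac, h⟩
  obtain ⟨θ₁, hθ₁, rfl⟩ := seg_mem_iff b hx₁
  obtain ⟨θ₂, hθ₂, rfl⟩ := seg_mem_iff b hx₂
  have h0 := congrFun h 0
  simp only [Pi.add_apply, Pi.smul_apply, smul_eq_mul] at h0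
  have esum : a * b 0 * (1 - θ₁) + c * b 0 * (1 - θ₂) = 0 := by
    linear_combination (b 0) * hac - h0
  have t1 : (0:ℝ) ≤ a * b 0 * (1 - θ₁) :=
    mul_nonneg (mul_nonneg ha.le hb.le) (by linarith [hθ₁.2])
  have t2 : (0:ℝ) ≤ c * b 0 * (1 - θ₂) :=
    mul_nonneg (mul_nonneg hc.le hb.le) (by linarith [hθ₂.2])
  have e1 : a * b 0 * (1 - θ₁) = 0 := by linarith
  have e2 : c * b 0 * (1 - θ₂) = 0 := by linarith
  have hθ1 : θ₁ = 1 := by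
    rcases mul_eq_zero.1 e1 with h' | h'
    · rcases mul_eq_zero.1 h' with h'' | h''
      · exact absurd h'' ha.ne'
      · exact absurd h'' hb.ne'
    · linarith
  have hθ2 : θ₂ = 1 := by
    rcases mul_eq_zero.1 e2 with h' | h'
    · rcases mul_eq_zero.1 h' with h'' | h''
      · exact absurd h'' hc.ne'
      · exact absurd h'' hb.ne'
    · linarith
  subst hθ1; subst hθ2
  simp

/-- The monoid of marked polytopes under marked Minkowski sum does not have
the cancellation property: there are marked polytopes `(convexHull ℝ A, V)`,
`(convexHull ℝ B, W)` and `(convexHull ℝ B, W')` with `W ≠ W'` whose marked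
Minkowski sums with `(convexHull ℝ A, V)` agree. -/
theorem marked_polytopes_not_cancellative :
    ∃ (A B : Set (Fin 2 → ℝ)) (V W W' : Set (Fin 2 → ℝ)),
      A.Finite ∧ A.Nonempty ∧ B.Finite ∧ B.Nonempty ∧
      V.Nonempty ∧ W.Nonempty ∧ W'.Nonempty ∧
      V ⊆ Set.extremePoints ℝ (convexHull ℝ A) ∧
      W ⊆ Set.extremePoints ℝ (convexHull ℝ B) ∧
      W' ⊆ Set.extremePoints ℝ (convexHull ℝ B) ∧
      W ≠ W' ∧
      (V + W) ∩ Set.extremePoints ℝ (convexHull ℝ A + convexHull ℝ B) =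
        (V + W') ∩ Set.extremePoints ℝ (convexHull ℝ A + convexHull ℝ B) := by
  set b1 : Fin 2 → ℝ := ![1, 0] with hb1
  set b2 : Fin 2 → ℝ := ![2, 0] with hb2
  have hb1pos : (0:ℝ) < b1 0 := by norm_num [hb1]
  have hb2pos : (0:ℝ) < b2 0 := by norm_num [hb2]
  have hb1ne : b1 ≠ 0 := by
    intro h; have := congrFun h 0; norm_num [hb1] at this
  refine ⟨{0, b2}, {0, b1}, {0}, {0, b1}, {0}, ?_, ?_, ?_, ?_, ?_, ?_, ?_, ?_, ?_, ?_, ?_, ?_⟩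
  · exact (Set.finite_singleton _).insert _
  · exact ⟨0, by simp⟩
  · exact (Set.finite_singleton _).insert _
  · exact ⟨0, by simp⟩
  · exact ⟨0, rfl⟩
  · exact ⟨0, by simp⟩
  · exact ⟨0, rfl⟩
  · simpa using zero_extreme b2 hb2pos
  · rintro x (rfl | rfl)
    · exact zero_extreme b1 hb1pos
    · exact right_extreme b1 hb1pos
  · simpa using zero_extreme b1 hb1pos
  · intro h
    have : b1 ∈ ({0} : Set (Fin 2 → ℝ)) := h ▸ (by simp : b1 ∈ ({0, b1} : Set (Fin 2 → ℝ)))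
    exact hb1ne (by simpa using this)
  · -- V + W = {0, b1}, V + W' = {0}; suffices b1 not extreme in sum
    have hVW : ({0} : Set (Fin 2 → ℝ)) + {0, b1} = {0, b1} := by
      simp [Set.singleton_add]
    have hVW' : ({0} : Set (Fin 2 → ℝ)) + {0} = {0} := by
      simp [Set.singleton_add]
    rw [hVW, hVW']
    have hnotext : b1 ∉ Set.extremePoints ℝ
        (convexHull ℝ ({0, b2} : Set (Fin 2 → ℝ)) + convexHull ℝ ({0, b1} : Set (Fin 2 → ℝ))) := by
      rw [mem_extremePoints]
      rintro ⟨-, hforall⟩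
      have h0mem : (0 : Fin 2 → ℝ) ∈
          convexHull ℝ ({0, b2} : Set (Fin 2 → ℝ)) + convexHull ℝ ({0, b1} : Set (Fin 2 → ℝ)) := by
        exact ⟨0, subset_convexHull ℝ _ (by simp), 0, subset_convexHull ℝ _ (by simp), by simp⟩
      have h2mem : b2 ∈
          convexHull ℝ ({0, b2} : Set (Fin 2 → ℝ)) + convexHull ℝ ({0, b1} : Set (Fin 2 → ℝ)) := by
        exact ⟨b2, subset_convexHull ℝ _ (by simp), 0, subset_convexHull ℝ _ (by simp), by simp⟩
      have hseg : b1 ∈ openSegment ℝ (0 : Fin 2 → ℝ) b2 := by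
        refine ⟨1/2, 1/2, by norm_num, by norm_num, by norm_num, ?_⟩
        funext i
        fin_cases i <;> simp [hb1, hb2]
      have := (hforall 0 h0mem b2 h2mem hseg).1
      exact hb1ne this.symm
    ext x
    simp only [Set.mem_inter_iff, Set.mem_insert_iff, Set.mem_singleton_iff]
    constructor
    · rintro ⟨rfl | rfl, hx⟩
      · exact ⟨rfl, hx⟩
      · exact absurd hx hnotext
    · rintro ⟨rfl, hx⟩
      exact ⟨Or.inl rfl, hx⟩
end
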